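/- Let k be a field. The k-algebra homomorphism ψ : k[x,y] → k[t] × k[t] determined by ψ(x) = (0, t²) and ψ(y) = (t, t) has kernel exactly the principal ideal generated by x(x−y²). Consequently the subalgebra of k[t] × k[t] generated by (t,t) and (0,t²) is isomorphic to k[x,y]/(x(x−y²)) (the coordinate ring of the plane curve singularity of type A₂). -/

import Mathlib

open MvPolynomial

noncomputable section

/-- The `k`-algebra homomorphism `k[x,y] → k[t] × k[t]` with
`x ↦ (0, t²)` and `y ↦ (t, t)` (here `x = X 0`, `y = X 1`). -/
def A2.psi (k : Type) [Field k] :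
    MvPolynomial (Fin 2) k →ₐ[k] Polynomial k × Polynomial k :=
  aeval (fun i : Fin 2 =>
    if i = 0 then ((0, Polynomial.X ^ 2) : Polynomial k × Polynomial k)
    else ((Polynomial.X, Polynomial.X) : Polynomial k × Polynomial k))

namespace A2aux

variable (k : Type) [Field k]

/-- `k[x,y] ≃ (k[y])[x]`. -/
def e : MvPolynomial (Fin 2) k ≃ₐ[k] Polynomial (Polynomial k) :=
  (finSuccEquiv k 1).trans (Polynomial.mapAlgEquiv
    ((renameEquiv k (Equiv.equivPUnit.{1,1} (Fin 1))).trans (pUnitAlgEquiv k)))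

lemma e_X0 : e k (X 0) = Polynomial.X := by
  simp [e, finSuccEquiv_X_zero]

lemma e_X1 : e k (X 1) = Polynomial.C Polynomial.X := by
  have : (X 1 : MvPolynomial (Fin 2) k) = X (Fin.succ 0) := rfl
  simp [e, this, finSuccEquiv_X_succ]

/-- The corresponding map `(k[y])[x] → k[t] × k[t]`. -/
def psi' : Polynomial (Polynomial k) →ₐ[k] Polynomial k × Polynomial k :=
  AlgHom.prod
    ((Polynomial.aeval (0 : Polynomial k)).restrictScalars k)
    ((Polynomial.aeval (Polynomial.X ^ 2 : Polynomial k)).restrictScalars k)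

lemma psi_eq : A2.psi k = (psi' k).comp (e k).toAlgHom := by
  apply MvPolynomial.algHom_ext
  intro i
  fin_cases i
  · simp [A2.psi, psi', e_X0, Prod.ext_iff]
  · simp [A2.psi, psi', e_X1, Prod.ext_iff]

lemma ker_psi' :
    RingHom.ker (psi' k) =
      Ideal.span {Polynomial.X * (Polynomial.X - Polynomial.C (Polynomial.X ^ 2))} := by
  ext p
  rw [RingHom.mem_ker, Ideal.mem_span_singleton]
  constructor
  · intro hp
    have h1 : Polynomial.aeval (0 : Polynomial k) p = 0 := congrArg Prod.fst hp
    have h2 : Polynomial.aeval (Polynomial.X ^ 2 : Polynomial k) p = 0 :=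
      congrArg Prod.snd hp
    rw [Polynomial.aeval_def, Polynomial.eval₂_at_zero] at h1
    have hX : Polynomial.X ∣ p := Polynomial.X_dvd_iff.2 (by simpa using h1)
    obtain ⟨q, rfl⟩ := hX
    rw [map_mul] at h2
    have hXa : Polynomial.aeval (Polynomial.X ^ 2 : Polynomial k)
        (Polynomial.X : Polynomial (Polynomial k)) =
        (Polynomial.X : Polynomial k) ^ 2 := by simp
    rw [hXa] at h2
    have hq : Polynomial.aeval (Polynomial.X ^ 2 : Polynomial k) q = 0 := by
      have : (Polynomial.X : Polynomial k) ^ 2 ≠ 0 := pow_ne_zero _ Polynomial.X_ne_zero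
      exact (mul_eq_zero.1 h2).resolve_left this
    have : (Polynomial.X - Polynomial.C ((Polynomial.X : Polynomial k) ^ 2)) ∣ q := by
      rw [Polynomial.dvd_iff_isRoot, Polynomial.IsRoot, ← Polynomial.coe_aeval_eq_eval]
      exact hq
    obtain ⟨r, rfl⟩ := this
    exact ⟨r, by ring⟩
  · rintro ⟨r, rfl⟩
    have : psi' k (Polynomial.X * (Polynomial.X - Polynomial.C (Polynomial.X ^ 2))) = 0 := by
      simp [psi', Prod.ext_iff]
    rw [map_mul, this, zero_mul]

end A2aux

theorem A2_kernel_of_normalization (k : Type) [Field k] :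
    RingHom.ker (A2.psi k) = Ideal.span {X 0 * (X 0 - X 1 ^ 2)} ∧
    Nonempty ((MvPolynomial (Fin 2) k ⧸ (Ideal.span {X 0 * (X 0 - X 1 ^ 2)} : Ideal (MvPolynomial (Fin 2) k))) ≃ₐ[k]
      (Algebra.adjoin k {((Polynomial.X, Polynomial.X) : Polynomial k × Polynomial k),
        ((0, Polynomial.X ^ 2) : Polynomial k × Polynomial k)})) := by
  have hker : RingHom.ker (A2.psi k) = Ideal.span {X 0 * (X 0 - X 1 ^ 2)} := by
    rw [A2aux.psi_eq]
    ext p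
    have : ((A2aux.psi' k).comp (A2aux.e k).toAlgHom) p = A2aux.psi' k (A2aux.e k p) := rfl
    rw [RingHom.mem_ker, this, ← RingHom.mem_ker, A2aux.ker_psi', Ideal.mem_span_singleton,
      Ideal.mem_span_singleton]
    have himg : A2aux.e k (X 0 * (X 0 - X 1 ^ 2)) =
        Polynomial.X * (Polynomial.X - Polynomial.C (Polynomial.X ^ 2)) := by
      rw [map_mul, map_sub, map_pow, A2aux.e_X0, A2aux.e_X1, ← Polynomial.C_pow]
    constructor
    · rintro ⟨c, hc⟩
      exact ⟨(A2aux.e k).symm c, by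
        apply (A2aux.e k).injective
        rw [map_mul, himg, hc, AlgEquiv.apply_symm_apply]⟩
    · rintro ⟨c, rfl⟩
      exact ⟨A2aux.e k c, by rw [map_mul, himg]⟩
  refine ⟨hker, ?_⟩
  have hrange : (A2.psi k).range =
      Algebra.adjoin k {((Polynomial.X, Polynomial.X) : Polynomial k × Polynomial k),
        ((0, Polynomial.X ^ 2) : Polynomial k × Polynomial k)} := by
    rw [A2.psi, ← Algebra.adjoin_range_eq_range_aeval]
    congr 1
    ext z
    constructor
    · rintro ⟨i, rfl⟩
      fin_cases i <;> simp
    · rintro (rfl | rfl)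
      · exact ⟨1, by simp⟩
      · exact ⟨0, by simp⟩
  have hsurj : Function.Surjective (A2.psi k).rangeRestrict :=
    (A2.psi k).rangeRestrict_surjective
  have := Ideal.quotientKerAlgEquivOfSurjective hsurj
  have hk : RingHom.ker (A2.psi k).rangeRestrict = Ideal.span {X 0 * (X 0 - X 1 ^ 2)} := by
    rw [AlgHom.ker_rangeRestrict, hker]
  replace this := (Ideal.quotientEquivAlgOfEq k hk).symm.trans this
  rw [← hrange]
  exact ⟨this⟩
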